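/- Let A be a real n × d matrix, A' a real n' × d matrix, and t > 0 a real number such that A'ᵀA' ⪯ t · AᵀA in the Loewner order. Let P be a Moore–Penrose pseudoinverse of AᵀA and P' a Moore–Penrose pseudoinverse of A'ᵀA'. Then every row a' of A' (viewed as a 1 × d row vector) satisfies a' P a'ᵀ ≤ t · (a' P' a'ᵀ). -/

import Mathlib

open Matrix BigOperators

/-- `P` is a Moore–Penrose pseudoinverse of `M`. -/
def IsMoorePenrose {d : ℕ} (M P : Matrix (Fin d) (Fin d) ℝ) : Prop :=
  M * P * M = M ∧ P * M * P = P ∧ (M * P)ᵀ = M * P ∧ (P * M)ᵀ = P * M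

private lemma mp_unique {d : ℕ} {M P Q : Matrix (Fin d) (Fin d) ℝ}
    (hP : IsMoorePenrose M P) (hQ : IsMoorePenrose M Q) : P = Q := by
  obtain ⟨p1, p2, p3, p4⟩ := hP
  obtain ⟨q1, q2, q3, q4⟩ := hQ
  have hMP : M * P = M * Q := by
    calc M * P = (M * P)ᵀ := p3.symm
    _ = ((M * Q * M) * P)ᵀ := by rw [q1]
    _ = (M * Q * (M * P))ᵀ := by noncomm_ring
    _ = (M * P)ᵀ * (M * Q)ᵀ := by rw [Matrix.transpose_mul]
    _ = (M * P) * (M * Q) := by rw [p3, q3]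
    _ = (M * P * M) * Q := by noncomm_ring
    _ = M * Q := by rw [p1]
  have hPM : P * M = Q * M := by
    calc P * M = (P * M)ᵀ := p4.symm
    _ = (P * (M * Q * M))ᵀ := by rw [q1]
    _ = ((P * M) * (Q * M))ᵀ := by noncomm_ring
    _ = (Q * M)ᵀ * (P * M)ᵀ := by rw [Matrix.transpose_mul]
    _ = (Q * M) * (P * M) := by rw [p4, q4]
    _ = Q * (M * P * M) := by noncomm_ring
    _ = Q * M := by rw [p1]
  calc P = P * M * P := p2.symm
  _ = P * (M * Q) := by rw [← hMP]; noncomm_ring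
  _ = (Q * M) * Q := by rw [← hPM]; noncomm_ring
  _ = Q := q2

private lemma mp_symm {d : ℕ} {M P : Matrix (Fin d) (Fin d) ℝ}
    (hM : Mᵀ = M) (hP : IsMoorePenrose M P) : Pᵀ = P := by
  obtain ⟨p1, p2, p3, p4⟩ := hP
  have hPt : IsMoorePenrose M Pᵀ := by
    refine ⟨?_, ?_, ?_, ?_⟩
    · calc M * Pᵀ * M = (Mᵀ * P * Mᵀ)ᵀ := by
            simp [Matrix.transpose_mul, Matrix.mul_assoc]
      _ = M := by rw [hM, p1, hM]
    · calc Pᵀ * M * Pᵀ = (P * Mᵀ * P)ᵀ := by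
            simp [Matrix.transpose_mul, Matrix.mul_assoc]
      _ = Pᵀ := by rw [hM, p2]
    · calc (M * Pᵀ)ᵀ = P * Mᵀ := by simp [Matrix.transpose_mul]
      _ = P * M := by rw [hM]
      _ = (P * M)ᵀ := p4.symm
      _ = Mᵀ * Pᵀ := by simp [Matrix.transpose_mul]
      _ = M * Pᵀ := by rw [hM]
    · calc (Pᵀ * M)ᵀ = Mᵀ * P := by simp [Matrix.transpose_mul]
      _ = M * P := by rw [hM]
      _ = (M * P)ᵀ := p3.symm
      _ = Pᵀ * Mᵀ := by simp [Matrix.transpose_mul]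
      _ = Pᵀ * M := by rw [hM]
  exact mp_unique hPt ⟨p1, p2, p3, p4⟩

private lemma dotmv {d m : ℕ} (B : Matrix (Fin d) (Fin m) ℝ) (v : Fin m → ℝ) (w : Fin d → ℝ) :
    (B *ᵥ v) ⬝ᵥ w = v ⬝ᵥ (Bᵀ *ᵥ w) := by
  rw [dotProduct_comm, dotProduct_mulVec, ← Matrix.mulVec_transpose, dotProduct_comm]

/-- The key range fact: `(A'ᵀA') P' A'ᵀ = A'ᵀ`. -/
private lemma range_fact {n' d : ℕ} (A' : Matrix (Fin n') (Fin d) ℝ)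
    (P' : Matrix (Fin d) (Fin d) ℝ) (hP' : IsMoorePenrose (A'ᵀ * A') P') :
    (A'ᵀ * A') * P' * A'ᵀ = A'ᵀ := by
  obtain ⟨p1, p2, p3, p4⟩ := hP'
  set M' := A'ᵀ * A' with hM'
  set Q := M' * P' with hQ
  set C : Matrix (Fin d) (Fin n') ℝ := A'ᵀ - Q * A'ᵀ with hC
  have hQsq : Q * Q = Q := by
    calc Q * Q = (M' * P' * M') * P' := by rw [hQ]; noncomm_ring
    _ = Q := by rw [p1]
  have hCtC : Cᵀ * C = A' * A'ᵀ - A' * Q * A'ᵀ := by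
    have hCt : Cᵀ = A' - A' * Q := by
      rw [hC, Matrix.transpose_sub, Matrix.transpose_mul, p3, Matrix.transpose_transpose]
    rw [hCt, hC]
    have : A' * Q * (Q * A'ᵀ) = A' * Q * A'ᵀ := by
      calc A' * Q * (Q * A'ᵀ) = A' * (Q * Q) * A'ᵀ := by
            simp only [Matrix.mul_assoc]
      _ = A' * Q * A'ᵀ := by rw [hQsq]
    rw [Matrix.sub_mul, Matrix.mul_sub, Matrix.mul_sub, this, ← Matrix.mul_assoc]
    abel
  have htr : (Cᵀ * C).trace = 0 := by
    rw [hCtC, Matrix.trace_sub]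
    have h1 : (A' * Q * A'ᵀ).trace = (A' * A'ᵀ).trace := by
      calc (A' * Q * A'ᵀ).trace = (A'ᵀ * (A' * Q)).trace := Matrix.trace_mul_comm _ _
      _ = ((M' * P') * M').trace := by
            rw [hQ, hM', ← Matrix.mul_assoc, Matrix.trace_mul_comm]
      _ = M'.trace := by rw [p1]
      _ = (A' * A'ᵀ).trace := by rw [hM', Matrix.trace_mul_comm]
    rw [h1, sub_self]
  have hCzero : C = 0 := by
    have hsum : ∑ j, ∑ k, (C k j) ^ 2 = 0 := by
      have : (Cᵀ * C).trace = ∑ j, ∑ k, (C k j) ^ 2 := by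
        simp [Matrix.trace, Matrix.diag, Matrix.mul_apply, sq]
      rw [← this, htr]
    ext k j
    have h2 : ∀ j ∈ Finset.univ, (0:ℝ) ≤ ∑ k, (C k j)^2 :=
      fun j _ => Finset.sum_nonneg fun k _ => sq_nonneg _
    have h3 := (Finset.sum_eq_zero_iff_of_nonneg h2).mp hsum j (Finset.mem_univ j)
    have h4 : ∀ k ∈ Finset.univ, (0:ℝ) ≤ (C k j)^2 := fun k _ => sq_nonneg _
    have h5 := (Finset.sum_eq_zero_iff_of_nonneg h4).mp h3 k (Finset.mem_univ k)
    simpa using pow_eq_zero_iff (n := 2) (by norm_num) |>.mp h5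
  have := sub_eq_zero.mp (hC ▸ hCzero : A'ᵀ - Q * A'ᵀ = 0)
  rw [hQ] at this
  exact this.symm

/-- If `A'ᵀA' ⪯ t · AᵀA`, then every row `a'` of `A'` satisfies
`a' (AᵀA)⁺ a'ᵀ ≤ t · a' (A'ᵀA')⁺ a'ᵀ`. -/
theorem stretch_row_bound (n n' d : ℕ) (t : ℝ) (ht : 0 < t)
    (A : Matrix (Fin n) (Fin d) ℝ) (A' : Matrix (Fin n') (Fin d) ℝ)
    (hle : (t • (Aᵀ * A) - A'ᵀ * A').PosSemidef)
    (P P' : Matrix (Fin d) (Fin d) ℝ)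
    (hP : IsMoorePenrose (Aᵀ * A) P) (hP' : IsMoorePenrose (A'ᵀ * A') P') :
    ∀ i : Fin n', A' i ⬝ᵥ P.mulVec (A' i) ≤ t * (A' i ⬝ᵥ P'.mulVec (A' i)) := by
  intro i
  have hMsymm : (Aᵀ * A)ᵀ = Aᵀ * A := by
    rw [Matrix.transpose_mul, Matrix.transpose_transpose]
  have hM'symm : (A'ᵀ * A')ᵀ = A'ᵀ * A' := by
    rw [Matrix.transpose_mul, Matrix.transpose_transpose]
  have hPsymm : Pᵀ = P := mp_symm hMsymm hP
  obtain ⟨p1, p2, p3, p4⟩ := hP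
  set M := Aᵀ * A with hM
  set M' := A'ᵀ * A' with hM'
  set x : Fin d → ℝ := A' i with hxdef
  set u : Fin d → ℝ := P *ᵥ x with hu
  set w : Fin d → ℝ := P' *ᵥ x with hw
  -- x as a matrix-vector product
  have hx : x = A'ᵀ *ᵥ (Pi.single i 1) := by
    funext k
    simp [hxdef, Matrix.mulVec, dotProduct, Pi.single_apply, Matrix.transpose_apply,
      mul_comm]
  -- f1 : M' *ᵥ w = x
  have f1 : M' *ᵥ w = x := by
    rw [hw, hx, Matrix.mulVec_mulVec, Matrix.mulVec_mulVec]
    rw [range_fact A' P' hP']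
  set s : ℝ := x ⬝ᵥ u with hs
  set s' : ℝ := x ⬝ᵥ w with hs'
  -- g1 : u ⬝ᵥ (M *ᵥ u) = s
  have g1 : u ⬝ᵥ (M *ᵥ u) = s := by
    calc u ⬝ᵥ (M *ᵥ u) = (P *ᵥ x) ⬝ᵥ (M *ᵥ u) := by rw [hu]
    _ = x ⬝ᵥ (Pᵀ *ᵥ (M *ᵥ u)) := dotmv P x (M *ᵥ u)
    _ = x ⬝ᵥ (P *ᵥ (M *ᵥ (P *ᵥ x))) := by rw [hPsymm, hu]
    _ = x ⬝ᵥ ((P * M * P) *ᵥ x) := by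
        rw [Matrix.mulVec_mulVec, Matrix.mulVec_mulVec, ← Matrix.mul_assoc]
    _ = s := by rw [p2, hs, hu]
  have e1 : u ⬝ᵥ (M' *ᵥ w) = s := by
    rw [f1, hs, dotProduct_comm]
  have e2 : w ⬝ᵥ (M' *ᵥ u) = s := by
    have := dotmv M' w u
    rw [hM'symm] at this
    rw [← this, f1, hs]
  have e3 : w ⬝ᵥ (M' *ᵥ w) = s' := by
    rw [f1, hs', dotProduct_comm]
  -- PSD of M' at v
  set v : Fin d → ℝ := t⁻¹ • u - w with hv
  have hvpos : 0 ≤ v ⬝ᵥ (M' *ᵥ v) := by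
    have h1 : M' *ᵥ v = A'ᵀ *ᵥ (A' *ᵥ v) := by
      rw [hM', Matrix.mulVec_mulVec]
    have h2 : v ⬝ᵥ (A'ᵀ *ᵥ (A' *ᵥ v)) = (A' *ᵥ v) ⬝ᵥ (A' *ᵥ v) :=
      (dotmv A' v (A' *ᵥ v)).symm
    rw [h1, h2]
    exact Finset.sum_nonneg fun j _ => mul_self_nonneg _
  have hexp : v ⬝ᵥ (M' *ᵥ v)
      = t⁻¹ * (t⁻¹ * (u ⬝ᵥ (M' *ᵥ u))) - t⁻¹ * s - t⁻¹ * s + s' := by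
    rw [hv]
    simp only [Matrix.mulVec_sub, Matrix.mulVec_smul, sub_dotProduct, dotProduct_sub,
      smul_dotProduct, dotProduct_smul, smul_eq_mul]
    rw [e1, e2, e3]
    ring
  -- comparison from hle
  have hcmp : u ⬝ᵥ (M' *ᵥ u) ≤ t * s := by
    have h0 := hle.dotProduct_mulVec_nonneg u
    rw [star_trivial] at h0
    rw [Matrix.sub_mulVec, dotProduct_sub, Matrix.smul_mulVec,
      dotProduct_smul, smul_eq_mul, g1] at h0
    linarith
  have hfinal : 0 ≤ t⁻¹ * (t⁻¹ * (t * s)) - t⁻¹ * s - t⁻¹ * s + s' := by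
    have := hvpos
    rw [hexp] at this
    have hb := hcmp
    nlinarith [inv_pos.mpr ht, mul_le_mul_of_nonneg_left hb (le_of_lt (inv_pos.mpr ht))]
  have hts : t⁻¹ * (t⁻¹ * (t * s)) = t⁻¹ * s := by
    field_simp
  rw [hts] at hfinal
  have : s ≤ t * s' := by
    have h := mul_le_mul_of_nonneg_left (by linarith : t⁻¹ * s ≤ s') (le_of_lt ht)
    calc s = t * (t⁻¹ * s) := by field_simp
    _ ≤ t * s' := h
  exact this
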